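/- For all α, β, γ > 0, b₀(γ,β,α)·θ_log(γ,β) + b₀(α,β,γ)·θ_log(α,β) ≥ β²/2, where b₀(α,β,γ) := ∂₁θ_log(β,γ)·α + ∂₂θ_log(β,γ)·β and θ_log is the logarithmic mean. -/

import Mathlib

open Real

noncomputable def thetaLog (r s : ℝ) : ℝ := ∫ p in (0:ℝ)..1, r ^ (1 - p) * s ^ p

noncomputable def dtheta1 (r s : ℝ) : ℝ := deriv (fun u : ℝ => thetaLog u s) r

noncomputable def dtheta2 (r s : ℝ) : ℝ := deriv (fun v : ℝ => thetaLog r v) s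

noncomputable def bfun (a b c : ℝ) : ℝ := dtheta1 b c * a + dtheta2 b c * b - thetaLog a b

noncomputable def b0fun (a b c : ℝ) : ℝ := dtheta1 b c * a + dtheta2 b c * b

namespace B0Aux

open MeasureTheory intervalIntegral Set

lemma cont_rpow_exp {r : ℝ} (hr : 0 < r) {f : ℝ → ℝ} (hf : Continuous f) :
    Continuous fun p : ℝ => r ^ f p :=
  continuous_const.rpow hf fun _ => Or.inl hr.ne'

lemma cont_theta {r s : ℝ} (hr : 0 < r) (hs : 0 < s) :
    Continuous fun p : ℝ => r ^ (1 - p) * s ^ p :=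
  (cont_rpow_exp hr (by continuity)).mul (cont_rpow_exp hs continuous_id)

lemma theta_pos {r s : ℝ} (hr : 0 < r) (hs : 0 < s) : 0 < thetaLog r s := by
  apply intervalIntegral.intervalIntegral_pos_of_pos_on
    ((cont_theta hr hs).intervalIntegrable 0 1)
  · intro x _
    positivity
  · norm_num

lemma theta_symm (r s : ℝ) : thetaLog r s = thetaLog s r := by
  have h := intervalIntegral.integral_comp_sub_left (a := (0:ℝ)) (b := 1)
    (fun q => s ^ (1 - q) * r ^ q) 1
  norm_num at h
  unfold thetaLog
  rw [← h]
  apply intervalIntegral.integral_congr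
  intro p _
  dsimp only
  rw [mul_comm]

noncomputable def Jfun (r s : ℝ) : ℝ := ∫ p in (0:ℝ)..1, p * r ^ (1 - p) * s ^ (p - 1)

lemma cont_J {r s : ℝ} (hr : 0 < r) (hs : 0 < s) :
    Continuous fun p : ℝ => p * r ^ (1 - p) * s ^ (p - 1) :=
  (continuous_id.mul (cont_rpow_exp hr (by continuity))).mul
    (cont_rpow_exp hs (by continuity))

lemma J_pos {r s : ℝ} (hr : 0 < r) (hs : 0 < s) : 0 < Jfun r s := by
  apply intervalIntegral.intervalIntegral_pos_of_pos_on
    ((cont_J hr hs).intervalIntegrable 0 1)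
  · intro x hx
    have := hx.1
    positivity
  · norm_num

lemma hasDerivAt_theta2 {r s : ℝ} (hr : 0 < r) (hs : 0 < s) :
    HasDerivAt (fun v => thetaLog r v) (Jfun r s) s := by
  have hε : (0:ℝ) < s / 2 := by linarith
  have hball : ∀ x ∈ Metric.ball s (s / 2), s / 2 < x := by
    intro x hx
    rw [Metric.mem_ball, Real.dist_eq, abs_lt] at hx
    linarith [hx.1]
  have H := intervalIntegral.hasDerivAt_integral_of_dominated_loc_of_deriv_le
    (𝕜 := ℝ)
    (F := fun (x : ℝ) (t : ℝ) => r ^ (1 - t) * x ^ t)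
    (F' := fun (x : ℝ) (t : ℝ) => r ^ (1 - t) * (t * x ^ (t - 1)))
    (x₀ := s) (a := 0) (b := 1) (μ := volume)
    (bound := fun t => r ^ (1 - t) * (s / 2) ^ (t - 1)) (Metric.ball_mem_nhds s hε)
    ?_ ?_ ?_ ?_ ?_ ?_
  · have h2 := H.2
    have hcongr : (∫ t in (0:ℝ)..1, r ^ (1 - t) * (t * s ^ (t - 1))) = Jfun r s := by
      apply intervalIntegral.integral_congr
      intro t _
      dsimp only
      ring
    rw [hcongr] at h2
    exact h2
  · filter_upwards [eventually_gt_nhds hs] with x hx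
    exact (cont_theta hr hx).aestronglyMeasurable
  · exact (cont_theta hr hs).intervalIntegrable 0 1
  · exact ((cont_rpow_exp hr (by continuity)).mul
      (continuous_id.mul (cont_rpow_exp hs (by continuity)))).aestronglyMeasurable
  · refine Filter.Eventually.of_forall fun t ht x hx => ?_
    have hxpos : 0 < x := lt_trans hε (hball x hx)
    have ht' : t ∈ Set.Ioc (0:ℝ) 1 := by
      rwa [Set.uIoc_of_le (by norm_num : (0:ℝ) ≤ 1)] at ht
    have ht0 : 0 ≤ t := ht'.1.le
    rw [Real.norm_eq_abs, abs_of_nonneg (mul_nonneg (Real.rpow_nonneg hr.le _)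
      (mul_nonneg ht0 (Real.rpow_nonneg hxpos.le _)))]
    apply mul_le_mul_of_nonneg_left _ (Real.rpow_nonneg hr.le _)
    calc t * x ^ (t - 1) ≤ 1 * (s / 2) ^ (t - 1) := by
          apply mul_le_mul ht'.2
            (Real.rpow_le_rpow_of_nonpos hε (hball x hx).le (by linarith [ht'.2]))
            (Real.rpow_nonneg hxpos.le _) zero_le_one
      _ = (s / 2) ^ (t - 1) := one_mul _
  · exact ((cont_rpow_exp hr (by continuity)).mul
      (cont_rpow_exp hε (by continuity))).intervalIntegrable 0 1
  · refine Filter.Eventually.of_forall fun t ht x hx => ?_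
    have hxpos : 0 < x := lt_trans hε (hball x hx)
    exact (Real.hasDerivAt_rpow_const (Or.inl hxpos.ne')).const_mul _

lemma dtheta2_eq {r s : ℝ} (hr : 0 < r) (hs : 0 < s) : dtheta2 r s = Jfun r s :=
  (hasDerivAt_theta2 hr hs).deriv

lemma dtheta1_eq {r s : ℝ} (hr : 0 < r) (hs : 0 < s) : dtheta1 r s = Jfun s r := by
  have hfe : (fun u : ℝ => thetaLog u s) = fun u : ℝ => thetaLog s u := by
    funext u; exact theta_symm u s
  rw [dtheta1, hfe]
  exact (hasDerivAt_theta2 hs hr).deriv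

lemma integral_sqrt_01 : (∫ p in (0:ℝ)..1, Real.sqrt p) = 2 / 3 := by
  have h : (∫ p in (0:ℝ)..1, Real.sqrt p) = ∫ p in (0:ℝ)..1, p ^ ((1:ℝ)/2) := by
    apply intervalIntegral.integral_congr
    intro p _
    exact Real.sqrt_eq_rpow p
  rw [h, integral_rpow (Or.inl (by norm_num))]
  norm_num

lemma key_CS {b x : ℝ} (hb : 0 < b) (hx : 0 < x) :
    4 / 9 * b ≤ Jfun b x * thetaLog x b := by
  have hP : 0 < Jfun b x := J_pos hb hx
  have hQ : 0 < thetaLog x b := theta_pos hx hb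
  set P := Jfun b x
  set Q := thetaLog x b
  set l := P / Q with hl
  have hlpos : 0 < l := div_pos hP hQ
  -- pointwise AM-GM
  have hpt : ∀ p ∈ Set.uIcc (0:ℝ) 1,
      2 * Real.sqrt l * (Real.sqrt b * Real.sqrt p)
        ≤ p * b ^ (1 - p) * x ^ (p - 1) + l * (x ^ (1 - p) * b ^ p) := by
    intro p hp
    rw [Set.uIcc_of_le (by norm_num : (0:ℝ) ≤ 1)] at hp
    have hp0 : 0 ≤ p := hp.1
    set u := p * b ^ (1 - p) * x ^ (p - 1) with hu
    set v := l * (x ^ (1 - p) * b ^ p) with hv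
    have hu0 : 0 ≤ u := by positivity
    have hv0 : 0 ≤ v := by positivity
    have huv : u * v = l * b * p := by
      rw [hu, hv]
      have h1 : b ^ (1 - p) * b ^ p = b := by
        rw [← Real.rpow_add hb]; norm_num
      have h2 : x ^ (p - 1) * x ^ (1 - p) = 1 := by
        rw [← Real.rpow_add hx]; norm_num
      calc p * b ^ (1 - p) * x ^ (p - 1) * (l * (x ^ (1 - p) * b ^ p))
          = l * (b ^ (1 - p) * b ^ p) * (x ^ (p - 1) * x ^ (1 - p)) * p := by ring
        _ = l * b * p := by rw [h1, h2]; ring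
    have hgm : 2 * (Real.sqrt u * Real.sqrt v) ≤ u + v := by
      nlinarith [sq_nonneg (Real.sqrt u - Real.sqrt v), Real.sq_sqrt hu0, Real.sq_sqrt hv0]
    have hsq : Real.sqrt u * Real.sqrt v = Real.sqrt l * (Real.sqrt b * Real.sqrt p) := by
      rw [← Real.sqrt_mul hu0, huv, Real.sqrt_mul (by positivity), Real.sqrt_mul hlpos.le]
      ring
    calc 2 * Real.sqrt l * (Real.sqrt b * Real.sqrt p)
        = 2 * (Real.sqrt u * Real.sqrt v) := by rw [hsq]; ring
      _ ≤ u + v := hgm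
  -- integrate
  have hint : (∫ p in (0:ℝ)..1, 2 * Real.sqrt l * (Real.sqrt b * Real.sqrt p))
      ≤ ∫ p in (0:ℝ)..1, (p * b ^ (1 - p) * x ^ (p - 1) + l * (x ^ (1 - p) * b ^ p)) := by
    apply intervalIntegral.integral_mono_on (by norm_num)
    · apply Continuous.intervalIntegrable
      continuity
    · exact ((cont_J hb hx).add (continuous_const.mul (cont_theta hx hb))).intervalIntegrable 0 1
    · intro p hp
      exact hpt p (by rw [Set.uIcc_of_le (by norm_num : (0:ℝ) ≤ 1)]; exact hp)
  have hLHS : (∫ p in (0:ℝ)..1, 2 * Real.sqrt l * (Real.sqrt b * Real.sqrt p))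
      = 2 * Real.sqrt l * Real.sqrt b * (2 / 3) := by
    have : (∫ p in (0:ℝ)..1, 2 * Real.sqrt l * (Real.sqrt b * Real.sqrt p))
        = ∫ p in (0:ℝ)..1, (2 * Real.sqrt l * Real.sqrt b) * Real.sqrt p := by
      apply intervalIntegral.integral_congr; intro p _; ring
    rw [this, intervalIntegral.integral_const_mul, integral_sqrt_01]
  have hRHS : (∫ p in (0:ℝ)..1, (p * b ^ (1 - p) * x ^ (p - 1) + l * (x ^ (1 - p) * b ^ p)))
      = P + l * Q := by
    rw [intervalIntegral.integral_add (g := fun p : ℝ => l * (x ^ (1 - p) * b ^ p)) ((cont_J hb hx).intervalIntegrable 0 1)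
      ((continuous_const.mul (cont_theta hx hb)).intervalIntegrable 0 1),
      intervalIntegral.integral_const_mul]
    rfl
  have hlQ : l * Q = P := div_mul_cancel₀ _ hQ.ne'
  have hmain : 2 * Real.sqrt l * Real.sqrt b * (2 / 3) ≤ 2 * P := by
    rw [hLHS] at hint
    rw [hRHS, hlQ] at hint
    linarith
  -- conclude
  have hsl := Real.sq_sqrt hlpos.le
  have hsb := Real.sq_sqrt hb.le
  have hslpos : 0 < Real.sqrt l := Real.sqrt_pos.mpr hlpos
  have hsbpos : 0 < Real.sqrt b := Real.sqrt_pos.mpr hb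
  have hlQ' : Real.sqrt l ^ 2 * Q = P := by rw [hsl]; exact hlQ
  nlinarith [mul_le_mul hmain hmain (by positivity) (by positivity),
    mul_pos hslpos hslpos, sq_nonneg (Real.sqrt l), hQ, hP]

end B0Aux

open B0Aux

theorem b0_theta_lower_half (a b c : ℝ) (ha : 0 < a) (hb : 0 < b) (hc : 0 < c) :
    b0fun c b a * thetaLog c b + b0fun a b c * thetaLog a b ≥ b ^ 2 / 2 := by
  have e1 : b0fun c b a = Jfun a b * c + Jfun b a * b := by
    rw [b0fun, dtheta1_eq hb ha, dtheta2_eq hb ha]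
  have e2 : b0fun a b c = Jfun c b * a + Jfun b c * b := by
    rw [b0fun, dtheta1_eq hb hc, dtheta2_eq hb hc]
  set X := Jfun b a * thetaLog c b with hX
  set Y := Jfun b c * thetaLog a b with hY
  have hCS1 : 4 / 9 * b ≤ Jfun b a * thetaLog a b := key_CS hb ha
  have hCS2 : 4 / 9 * b ≤ Jfun b c * thetaLog c b := key_CS hb hc
  have hX0 : 0 ≤ X := mul_nonneg (J_pos hb ha).le (theta_pos hc hb).le
  have hY0 : 0 ≤ Y := mul_nonneg (J_pos hb hc).le (theta_pos ha hb).le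
  have hXY : (4 / 9 * b) * (4 / 9 * b) ≤ X * Y := by
    calc (4 / 9 * b) * (4 / 9 * b)
        ≤ (Jfun b a * thetaLog a b) * (Jfun b c * thetaLog c b) :=
          mul_le_mul hCS1 hCS2 (by positivity)
            (mul_nonneg (J_pos hb ha).le (theta_pos ha hb).le)
      _ = X * Y := by rw [hX, hY]; ring
  have hsum : 8 / 9 * b ≤ X + Y := by
    nlinarith [sq_nonneg (X - Y), hX0, hY0, hb.le, hXY]
  have h0a : 0 ≤ Jfun a b * c * thetaLog c b :=
    mul_nonneg (mul_nonneg (J_pos ha hb).le hc.le) (theta_pos hc hb).le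
  have h0c : 0 ≤ Jfun c b * a * thetaLog a b :=
    mul_nonneg (mul_nonneg (J_pos hc hb).le ha.le) (theta_pos ha hb).le
  have hexp : b0fun c b a * thetaLog c b + b0fun a b c * thetaLog a b
      = Jfun a b * c * thetaLog c b + Jfun c b * a * thetaLog a b + b * X + b * Y := by
    rw [e1, e2, hX, hY]; ring
  rw [ge_iff_le, hexp]
  nlinarith [mul_le_mul_of_nonneg_left hsum hb.le, sq_nonneg b, h0a, h0c, hb.le]
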